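/- Let M, N ∈ S^{q+r} with N ∈ Π_{q,r}, and assume N has at least one positive eigenvalue. Then the following are equivalent: (i) Z_r(N) ⊆ Z_r(M); (ii) xᵀ M x ≥ 0 for all x ∈ ℝ^{q+r} satisfying xᵀ N x ≥ 0. -/

import Mathlib

open Matrix
open scoped Classical

/-- The Moore–Penrose pseudoinverse of a real matrix, defined via its four
characterizing Penrose conditions (which determine it uniquely). -/
noncomputable def pinv {m n : ℕ} (A : Matrix (Fin m) (Fin n) ℝ) : Matrix (Fin n) (Fin m) ℝ :=
  if h : ∃ B : Matrix (Fin n) (Fin m) ℝ,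
      A * B * A = A ∧ B * A * B = B ∧ (A * B)ᵀ = A * B ∧ (B * A)ᵀ = B * A
  then h.choose else 0

/-- The unique positive semidefinite square root of a positive semidefinite matrix
(defined by its characterizing property, which determines it uniquely). -/
noncomputable def msqrt {n : ℕ} (A : Matrix (Fin n) (Fin n) ℝ) : Matrix (Fin n) (Fin n) ℝ :=
  if h : ∃ B : Matrix (Fin n) (Fin n) ℝ, B.PosSemidef ∧ B * B = A then h.choose else 0

/-- The quadratic matrix expression `[I; Z]ᵀ Π [I; Z]`. -/
noncomputable def qmi {q r : ℕ} (P : Matrix (Fin q ⊕ Fin r) (Fin q ⊕ Fin r) ℝ)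
    (Z : Matrix (Fin r) (Fin q) ℝ) : Matrix (Fin q) (Fin q) ℝ :=
  (fromRows (1 : Matrix (Fin q) (Fin q) ℝ) Z)ᵀ * P * fromRows 1 Z

/-- The solution set `Z_r(Π)` of the nonstrict QMI. -/
def ZrSet {q r : ℕ} (P : Matrix (Fin q ⊕ Fin r) (Fin q ⊕ Fin r) ℝ) :
    Set (Matrix (Fin r) (Fin q) ℝ) := {Z | (qmi P Z).PosSemidef}

/-- The solution set `Z_r⁺(Π)` of the strict QMI. -/
def ZrPlusSet {q r : ℕ} (P : Matrix (Fin q ⊕ Fin r) (Fin q ⊕ Fin r) ℝ) :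
    Set (Matrix (Fin r) (Fin q) ℝ) := {Z | (qmi P Z).PosDef}

/-- The solution set `Z_r⁰(Π)` of the quadratic matrix equality. -/
def ZrZeroSet {q r : ℕ} (P : Matrix (Fin q ⊕ Fin r) (Fin q ⊕ Fin r) ℝ) :
    Set (Matrix (Fin r) (Fin q) ℝ) := {Z | qmi P Z = 0}

/-- Generalized Schur complement `Π|Π₂₂ = Π₁₁ − Π₁₂ Π₂₂^† Π₂₁`. -/
noncomputable def schurC {q r : ℕ} (P : Matrix (Fin q ⊕ Fin r) (Fin q ⊕ Fin r) ℝ) :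
    Matrix (Fin q) (Fin q) ℝ :=
  P.toBlocks₁₁ - P.toBlocks₁₂ * pinv P.toBlocks₂₂ * P.toBlocks₂₁

/-- Membership in the class `Π_{q,r}`: symmetric, `Π₂₂ ⪯ 0`, `Π|Π₂₂ ⪰ 0`,
and `ker Π₂₂ ⊆ ker Π₁₂`. -/
def memPi {q r : ℕ} (P : Matrix (Fin q ⊕ Fin r) (Fin q ⊕ Fin r) ℝ) : Prop :=
  P.IsSymm ∧ (-P.toBlocks₂₂).PosSemidef ∧ (schurC P).PosSemidef ∧
    ∀ x : Fin r → ℝ, P.toBlocks₂₂ *ᵥ x = 0 → P.toBlocks₁₂ *ᵥ x = 0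


/-! ### Auxiliary lemmas -/

lemma ct_eq {a b : ℕ} (M : Matrix (Fin a) (Fin b) ℝ) : Mᴴ = Mᵀ := by
  ext i j; simp

lemma exists_penrose {n : ℕ} (A : Matrix (Fin n) (Fin n) ℝ) (hA : A.IsHermitian) :
    ∃ B : Matrix (Fin n) (Fin n) ℝ,
      A * B * A = A ∧ B * A * B = B ∧ (A * B)ᵀ = A * B ∧ (B * A)ᵀ = B * A := by
  classical
  have hsp := hA.spectral_theorem
  simp only [RCLike.ofReal_real_eq_id] at hsp
  set U : Matrix (Fin n) (Fin n) ℝ := (hA.eigenvectorUnitary : Matrix (Fin n) (Fin n) ℝ) with hU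
  set d : Fin n → ℝ := hA.eigenvalues with hd
  have hUU : star U * U = 1 := (Unitary.mem_iff.mp (hA.eigenvectorUnitary).2).1
  have hAeq : A = U * diagonal d * star U := by
    rw [Unitary.conjStarAlgAut_apply] at hsp; exact hsp
  set B : Matrix (Fin n) (Fin n) ℝ := U * diagonal (fun i => (d i)⁻¹) * star U with hB
  have key : ∀ e f : Fin n → ℝ, (U * diagonal e * star U) * (U * diagonal f * star U)
      = U * diagonal (fun i => e i * f i) * star U := by
    intro e f
    calc (U * diagonal e * star U) * (U * diagonal f * star U)
        = U * diagonal e * (star U * U) * diagonal f * star U := by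
          simp only [Matrix.mul_assoc]
      _ = U * diagonal (fun i => e i * f i) * star U := by
          rw [hUU]; simp only [Matrix.mul_one, Matrix.mul_assoc, diagonal_mul_diagonal]
  have hstar : star U = Uᵀ := by rw [Matrix.star_eq_conjTranspose, ct_eq]
  have hsym : ∀ e : Fin n → ℝ, (U * diagonal e * star U)ᵀ = U * diagonal e * star U := by
    intro e
    rw [hstar]
    simp [Matrix.transpose_mul, Matrix.mul_assoc]
  refine ⟨B, ?_, ?_, ?_, ?_⟩
  · rw [hAeq, hB, key, key]
    congr 2
    ext i
    by_cases h : d i = 0 <;> field_simp [h]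
  · rw [hAeq, hB, key, key]
    congr 2
    ext i
    by_cases h : d i = 0 <;> field_simp [h]
  · rw [hAeq, hB, key]; exact hsym _
  · rw [hAeq, hB, key]; exact hsym _

lemma penrose_unique {m n : ℕ} (A : Matrix (Fin m) (Fin n) ℝ) (B C : Matrix (Fin n) (Fin m) ℝ)
    (hB : A * B * A = A ∧ B * A * B = B ∧ (A * B)ᵀ = A * B ∧ (B * A)ᵀ = B * A)
    (hC : A * C * A = A ∧ C * A * C = C ∧ (A * C)ᵀ = A * C ∧ (C * A)ᵀ = C * A) :
    B = C := by
  obtain ⟨hB1, hB2, hB3, hB4⟩ := hB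
  obtain ⟨hC1, hC2, hC3, hC4⟩ := hC
  have hCA : C * A = B * A := by
    calc C * A = (C * A)ᵀ := hC4.symm
      _ = Aᵀ * Cᵀ := transpose_mul _ _
      _ = (A * (B * A))ᵀ * Cᵀ := by rw [← Matrix.mul_assoc A B A, hB1]
      _ = (B * A)ᵀ * Aᵀ * Cᵀ := by rw [transpose_mul]
      _ = B * A * (Aᵀ * Cᵀ) := by rw [hB4, Matrix.mul_assoc]
      _ = B * A * (C * A)ᵀ := by rw [transpose_mul]
      _ = B * (A * (C * A)) := by rw [hC4, Matrix.mul_assoc]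
      _ = B * A := by rw [show A * (C * A) = A from by rw [← Matrix.mul_assoc, hC1]]
  have hAB : A * B = A * C := by
    calc A * B = (A * B)ᵀ := hB3.symm
      _ = Bᵀ * Aᵀ := transpose_mul _ _
      _ = Bᵀ * ((A * C) * A)ᵀ := by rw [Matrix.mul_assoc A C A, ← Matrix.mul_assoc A C A, hC1]
      _ = Bᵀ * (Aᵀ * (A * C)ᵀ) := by rw [transpose_mul]
      _ = Bᵀ * Aᵀ * (A * C) := by rw [hC3, Matrix.mul_assoc]
      _ = (A * B)ᵀ * (A * C) := by rw [transpose_mul]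
      _ = (A * B) * (A * C) := by rw [hB3]
      _ = (A * B * A) * C := by rw [Matrix.mul_assoc, Matrix.mul_assoc, Matrix.mul_assoc]
      _ = A * C := by rw [hB1]
  calc B = B * A * B := hB2.symm
    _ = B * (A * B) := Matrix.mul_assoc _ _ _
    _ = B * (A * C) := by rw [hAB]
    _ = (B * A) * C := (Matrix.mul_assoc _ _ _).symm
    _ = (C * A) * C := by rw [hCA]
    _ = C := by rw [Matrix.mul_assoc, ← Matrix.mul_assoc, hC2]

lemma pinv_spec {n : ℕ} (A : Matrix (Fin n) (Fin n) ℝ) (hA : A.IsSymm) :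
    A * pinv A * A = A ∧ pinv A * A * pinv A = pinv A ∧
      (A * pinv A)ᵀ = A * pinv A ∧ (pinv A * A)ᵀ = pinv A * A := by
  have hherm : A.IsHermitian := by rw [Matrix.IsHermitian, ct_eq]; exact hA
  have hex := exists_penrose A hherm
  rw [pinv, dif_pos hex]
  exact hex.choose_spec

lemma pinv_symm {n : ℕ} (A : Matrix (Fin n) (Fin n) ℝ) (hA : A.IsSymm) :
    (pinv A)ᵀ = pinv A := by
  obtain ⟨h1, h2, h3, h4⟩ := pinv_spec A hA
  have hA' : Aᵀ = A := hA
  set B := pinv A with hB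
  apply penrose_unique A _ _ ?_ (pinv_spec A hA)
  have c1 : A * Bᵀ * A = A := by
    have h := congrArg transpose h1
    rw [transpose_mul, transpose_mul, hA'] at h
    rw [Matrix.mul_assoc]
    exact h
  have c2 : Bᵀ * A * Bᵀ = Bᵀ := by
    have h := congrArg transpose h2
    rw [transpose_mul, transpose_mul, hA'] at h
    rw [Matrix.mul_assoc]
    exact h
  have c3' : A * Bᵀ = B * A := by
    calc A * Bᵀ = Aᵀᵀ * Bᵀ := by rw [transpose_transpose]
      _ = (B * Aᵀ)ᵀ := by rw [transpose_mul]
      _ = (B * A)ᵀ := by rw [hA']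
      _ = B * A := h4
  have c4' : Bᵀ * A = A * B := by
    calc Bᵀ * A = Bᵀ * Aᵀᵀ := by rw [transpose_transpose]
      _ = (Aᵀ * B)ᵀ := by rw [transpose_mul]
      _ = (A * B)ᵀ := by rw [hA']
      _ = A * B := h3
  exact ⟨c1, c2, by rw [c3', h4], by rw [c4', h3]⟩

lemma eq_of_mulVec_eq {m n : ℕ} {A B : Matrix (Fin m) (Fin n) ℝ}
    (h : ∀ x : Fin n → ℝ, A *ᵥ x = B *ᵥ x) : A = B := by
  ext i j
  have := congrFun (h (Pi.single j 1)) i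
  simpa [Matrix.mulVec_single] using this

lemma vecMulVec_mulVec' {r q : ℕ} (y : Fin r → ℝ) (a v : Fin q → ℝ) :
    vecMulVec y a *ᵥ v = (a ⬝ᵥ v) • y := by
  ext i
  simp only [Matrix.mulVec, Matrix.vecMulVec_apply, dotProduct, Pi.smul_apply,
    smul_eq_mul, Finset.sum_mul]
  exact Finset.sum_congr rfl fun j _ => by ring

lemma qmi_eq' {q r : ℕ} (P : Matrix (Fin q ⊕ Fin r) (Fin q ⊕ Fin r) ℝ)
    (Z : Matrix (Fin r) (Fin q) ℝ) : qmi P Z =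
    @HMul.hMul _ _ _ Matrix.instHMulOfFintypeOfMulOfAddCommMonoid
      (@HMul.hMul _ _ _ Matrix.instHMulOfFintypeOfMulOfAddCommMonoid
        (fromRows (1 : Matrix (Fin q) (Fin q) ℝ) Z)ᵀ P) (fromRows (1 : Matrix (Fin q) (Fin q) ℝ) Z) := rfl

lemma qmi_form {q r : ℕ} (P : Matrix (Fin q ⊕ Fin r) (Fin q ⊕ Fin r) ℝ)
    (Z : Matrix (Fin r) (Fin q) ℝ) (v : Fin q → ℝ) :
    v ⬝ᵥ (qmi P Z *ᵥ v) = (Sum.elim v (Z *ᵥ v)) ⬝ᵥ (P *ᵥ (Sum.elim v (Z *ᵥ v))) := by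
  rw [qmi_eq']
  rw [← Matrix.mulVec_mulVec, ← Matrix.mulVec_mulVec, Matrix.dotProduct_mulVec,
    Matrix.vecMul_transpose, Matrix.fromRows_mulVec, Matrix.one_mulVec]

lemma qmi_herm {q r : ℕ} (P : Matrix (Fin q ⊕ Fin r) (Fin q ⊕ Fin r) ℝ) (hP : P.IsSymm)
    (Z : Matrix (Fin r) (Fin q) ℝ) : (qmi P Z).IsHermitian := by
  have h : (qmi P Z)ᵀ = qmi P Z := by
    rw [qmi_eq']
    rw [transpose_mul, transpose_mul, transpose_transpose, hP.eq, Matrix.mul_assoc]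
  rw [Matrix.IsHermitian, ct_eq]
  exact h

lemma quad_coeff_nonneg (a b c : ℝ) (h : ∀ t : ℝ, 0 ≤ a * t ^ 2 + b * t + c) : 0 ≤ a := by
  by_contra hneg
  push_neg at hneg
  have hc : 0 ≤ c := by have h0 := h 0; simpa using h0
  have hapos : 0 < -a := by linarith
  set t := Real.sqrt ((c + 1) / (-a)) with ht
  have ht2 : t ^ 2 = (c + 1) / (-a) := Real.sq_sqrt (by positivity)
  have hat : a * t ^ 2 = -(c + 1) := by
    rw [ht2]; field_simp [hneg.ne]
  have h1 := h t
  have h2 := h (-t)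
  nlinarith [h1, h2, hat]

lemma cauchy_schwarz_psd {n : ℕ} (S : Matrix (Fin n) (Fin n) ℝ) (hS : S.PosSemidef)
    (u v : Fin n → ℝ) :
    (v ⬝ᵥ (S *ᵥ u)) ^ 2 ≤ (v ⬝ᵥ (S *ᵥ v)) * (u ⬝ᵥ (S *ᵥ u)) := by
  have hS' : Sᵀ = S := by rw [← ct_eq]; exact hS.1
  have hsymm : ∀ a b : Fin n → ℝ, a ⬝ᵥ (S *ᵥ b) = b ⬝ᵥ (S *ᵥ a) := by
    intro a b
    calc a ⬝ᵥ (S *ᵥ b) = (a ᵥ* S) ⬝ᵥ b := Matrix.dotProduct_mulVec _ _ _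
      _ = (Sᵀ *ᵥ a) ⬝ᵥ b := by rw [Matrix.mulVec_transpose]
      _ = b ⬝ᵥ (Sᵀ *ᵥ a) := dotProduct_comm _ _
      _ = b ⬝ᵥ (S *ᵥ a) := by rw [hS']
  have key : ∀ lam : ℝ, 0 ≤ (u ⬝ᵥ (S *ᵥ u)) * (lam * lam)
      + (2 * (v ⬝ᵥ (S *ᵥ u))) * lam + v ⬝ᵥ (S *ᵥ v) := by
    intro lam
    have h0 := hS.dotProduct_mulVec_nonneg (v + lam • u)
    rw [star_trivial] at h0
    have hexp : (v + lam • u) ⬝ᵥ (S *ᵥ (v + lam • u))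
        = (u ⬝ᵥ (S *ᵥ u)) * (lam * lam) + (2 * (v ⬝ᵥ (S *ᵥ u))) * lam + v ⬝ᵥ (S *ᵥ v) := by
      rw [Matrix.mulVec_add, Matrix.mulVec_smul, dotProduct_add, add_dotProduct,
        add_dotProduct, dotProduct_smul, smul_dotProduct,
        smul_dotProduct, dotProduct_smul, hsymm u v]
      simp only [smul_eq_mul]
      ring
    rw [hexp] at h0
    exact h0
  have hd := discrim_le_zero key
  rw [discrim] at hd
  nlinarith [hd]

lemma dp_swap {m n : ℕ} (A : Matrix (Fin m) (Fin n) ℝ) (a : Fin n → ℝ) (b : Fin m → ℝ) :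
    (A *ᵥ a) ⬝ᵥ b = a ⬝ᵥ (Aᵀ *ᵥ b) := by
  rw [dotProduct_comm, Matrix.dotProduct_mulVec, ← Matrix.mulVec_transpose,
    dotProduct_comm]

set_option maxHeartbeats 1000000 in
/-- For symmetric `M` and `N ∈ Π_{q,r}` with at least one positive
eigenvalue, `Z_r(N)` ⊆ `Z_r(M)` iff `xᵀNx ≥ 0 ⟹ xᵀMx ≥ 0` for all `x`. -/
theorem stmt_11 {q r : ℕ} (M N : Matrix (Fin q ⊕ Fin r) (Fin q ⊕ Fin r) ℝ)
    (hM : M.IsSymm) (hN : memPi N)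
    (hpos : ∃ μ : ℝ, 0 < μ ∧ Module.End.HasEigenvalue (Matrix.mulVecLin N) μ) :
    ZrSet N ⊆ ZrSet M ↔
      ∀ x : Fin q ⊕ Fin r → ℝ, 0 ≤ x ⬝ᵥ (N *ᵥ x) → 0 ≤ x ⬝ᵥ (M *ᵥ x) := by
  classical
  obtain ⟨hNsymm, hN22psd, hSpsd, hker⟩ := hN
  set N11 := N.toBlocks₁₁ with hN11d
  set N12 := N.toBlocks₁₂ with hN12d
  set N21 := N.toBlocks₂₁ with hN21d
  set N22 := N.toBlocks₂₂ with hN22d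
  set S := schurC N with hSd
  have happ : ∀ i j, N j i = N i j := fun i j => hNsymm.apply i j
  have hN22symm : N22.IsSymm := by
    rw [Matrix.IsSymm]; ext i j
    rw [Matrix.transpose_apply, hN22d]
    exact happ _ _
  have hN21 : N21 = N12ᵀ := by
    ext i j
    rw [hN21d, hN12d, Matrix.transpose_apply]
    exact happ _ _
  obtain ⟨hp1, hp2, hp3, hp4⟩ := pinv_spec N22 hN22symm
  have hpt : (pinv N22)ᵀ = pinv N22 := pinv_symm N22 hN22symm
  set K : Matrix (Fin r) (Fin q) ℝ := pinv N22 * N21 with hKd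
  -- ker N22 ⊆ ker N12, matrix version
  have key1 : N12 * (pinv N22 * N22) = N12 := by
    apply eq_of_mulVec_eq
    intro x
    have hker' : N22 *ᵥ ((pinv N22 * N22) *ᵥ x - x) = 0 := by
      rw [Matrix.mulVec_sub, Matrix.mulVec_mulVec,
        show N22 * (pinv N22 * N22) = N22 from by rw [← Matrix.mul_assoc, hp1], sub_self]
    have h12 := hker _ hker'
    rw [Matrix.mulVec_sub] at h12
    have h' := sub_eq_zero.mp h12
    rw [Matrix.mulVec_mulVec] at h'
    exact h' 

  have hKmat : N22 * K = N21 := by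
    have h := congrArg transpose key1
    rw [transpose_mul, transpose_mul, hpt, hN22symm.eq, ← hN21] at h
    show N22 * (pinv N22 * N21) = N21
    rw [← Matrix.mul_assoc]
    exact h
  have hKt : Kᵀ = N12 * pinv N22 := by
    rw [hKd, transpose_mul, hpt, hN21, transpose_transpose]
  -- the scalar decomposition
  have decomp : ∀ (u : Fin q → ℝ) (w : Fin r → ℝ),
      Sum.elim u w ⬝ᵥ (N *ᵥ Sum.elim u w)
        = u ⬝ᵥ (S *ᵥ u) + (w + K *ᵥ u) ⬝ᵥ (N22 *ᵥ (w + K *ᵥ u)) := by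
    intro u w
    have hblock : N *ᵥ Sum.elim u w
        = Sum.elim (N11 *ᵥ u + N12 *ᵥ w) (N21 *ᵥ u + N22 *ᵥ w) := by
      conv_lhs => rw [← Matrix.fromBlocks_toBlocks N]
      rw [Matrix.fromBlocks_mulVec]
      simp only [Sum.elim_comp_inl, Sum.elim_comp_inr, ← hN11d, ← hN12d, ← hN21d, ← hN22d]
    have hS' : S *ᵥ u = N11 *ᵥ u - (N12 * (pinv N22 * N21)) *ᵥ u := by
      rw [hSd, schurC, Matrix.sub_mulVec, Matrix.mul_assoc]
    have e3 : N22 *ᵥ (K *ᵥ u) = N21 *ᵥ u := by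
      rw [Matrix.mulVec_mulVec, hKmat]
    have e4 : (K *ᵥ u) ⬝ᵥ (N22 *ᵥ w) = (N21 *ᵥ u) ⬝ᵥ w := by
      rw [← e3, dp_swap N22 (K *ᵥ u) w, hN22symm.eq]
    have e5 : (K *ᵥ u) ⬝ᵥ (N21 *ᵥ u) = u ⬝ᵥ ((N12 * (pinv N22 * N21)) *ᵥ u) := by
      rw [dp_swap, hKt, Matrix.mulVec_mulVec, Matrix.mul_assoc]
    have e6 : u ⬝ᵥ (N12 *ᵥ w) = (N21 *ᵥ u) ⬝ᵥ w := by
      rw [hN21, dp_swap N12ᵀ u w, transpose_transpose]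
    rw [hblock, sumElim_dotProduct_sumElim, hS', Matrix.mulVec_add, e3]
    simp only [dotProduct_add, add_dotProduct, dotProduct_sub,
      sub_dotProduct]
    have e7 : w ⬝ᵥ (N21 *ᵥ u) = (N21 *ᵥ u) ⬝ᵥ w := dotProduct_comm _ _
    linarith [e4, e5, e6, e7]
  -- basic positivity facts
  have hsq : ∀ v : Fin q → ℝ, 0 ≤ v ⬝ᵥ (S *ᵥ v) := by
    intro v; have h := hSpsd.dotProduct_mulVec_nonneg v; rwa [star_trivial] at h
  have hn22 : ∀ z : Fin r → ℝ, z ⬝ᵥ (N22 *ᵥ z) ≤ 0 := by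
    intro z
    have h := hN22psd.dotProduct_mulVec_nonneg z
    rw [star_trivial, Matrix.neg_mulVec, dotProduct_neg] at h
    linarith
  constructor
  · -- hard direction
    intro hsub x hxN
    set u : Fin q → ℝ := x ∘ Sum.inl with hud
    set w : Fin r → ℝ := x ∘ Sum.inr with hwd
    have hx : x = Sum.elim u w := by funext i; cases i <;> rfl
    set y : Fin r → ℝ := w + K *ᵥ u with hyd
    have hdx : x ⬝ᵥ (N *ᵥ x) = u ⬝ᵥ (S *ᵥ u) + y ⬝ᵥ (N22 *ᵥ y) := by
      conv_lhs => rw [hx]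
      exact decomp u w
    rw [hdx] at hxN
    -- generic construction: membership certificate
    have main : ∀ a : Fin q → ℝ, a ⬝ᵥ u = 1 →
        (∀ v, 0 ≤ v ⬝ᵥ (S *ᵥ v) + (a ⬝ᵥ v) ^ 2 * (y ⬝ᵥ (N22 *ᵥ y))) →
        0 ≤ x ⬝ᵥ (M *ᵥ x) := by
      intro a hau hpos'
      set Z := vecMulVec y a - K with hZd
      have hZv : ∀ v, Z *ᵥ v = (a ⬝ᵥ v) • y - K *ᵥ v := by
        intro v; rw [hZd, Matrix.sub_mulVec, vecMulVec_mulVec']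
      have hmem : Z ∈ ZrSet N := by
        refine .of_dotProduct_mulVec_nonneg (qmi_herm N hNsymm Z) fun v => ?_
        rw [star_trivial, qmi_form, hZv, decomp]
        rw [show ((a ⬝ᵥ v) • y - K *ᵥ v) + K *ᵥ v = (a ⬝ᵥ v) • y from by abel]
        rw [Matrix.mulVec_smul, dotProduct_smul, smul_dotProduct]
        have := hpos' v
        simp only [smul_eq_mul]
        nlinarith [this]
      have hmm := hsub hmem
      have hZu : Z *ᵥ u = w := by
        rw [hZv, hau, one_smul, hyd]; abel
      have h2 := hmm.dotProduct_mulVec_nonneg u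
      rw [star_trivial, qmi_form, hZu, ← hx] at h2
      exact h2
    by_cases hu0 : u = 0
    · -- u = 0
      have hs0' : u ⬝ᵥ (S *ᵥ u) = 0 := by rw [hu0]; simp
      have hyN : y ⬝ᵥ (N22 *ᵥ y) = 0 := le_antisymm (hn22 y) (by linarith [hxN, hs0'])
      have hyw : y = w := by rw [hyd, hu0]; simp
      rcases Nat.eq_zero_or_pos q with hq | hq
      · -- q = 0 : contradiction with positive eigenvalue
        exfalso
        obtain ⟨μ, hμ, hev⟩ := hpos
        obtain ⟨v, hv⟩ := hev.exists_hasEigenvector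
        have hvec : N *ᵥ v = μ • v := hv.apply_eq_smul
        have hvd : v ⬝ᵥ (N *ᵥ v) = μ * (v ⬝ᵥ v) := by
          rw [hvec, dotProduct_smul, smul_eq_mul]
        have hvne : v ⬝ᵥ v ≠ 0 := fun h =>
          hv.right (dotProduct_self_eq_zero.mp h)
        have hvnn : 0 ≤ v ⬝ᵥ v := Finset.sum_nonneg fun i _ => mul_self_nonneg _
        have hvpos : 0 < v ⬝ᵥ v := lt_of_le_of_ne hvnn (Ne.symm hvne)
        have hfin : IsEmpty (Fin q) := by rw [hq]; exact Fin.isEmpty'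
        have hv' : v = Sum.elim (v ∘ Sum.inl) (v ∘ Sum.inr) := by
          funext i; cases i <;> rfl
        have hz : (v ∘ Sum.inl) ⬝ᵥ (S *ᵥ (v ∘ Sum.inl)) = 0 := by
          rw [dotProduct]
          simp [Finset.univ_eq_empty]
        have hvN : v ⬝ᵥ (N *ᵥ v) ≤ 0 := by
          conv_lhs => rw [hv']
          rw [decomp, hz, zero_add]
          exact hn22 _
        linarith [hvd, hvN, mul_pos hμ hvpos]
      · -- q ≥ 1 : perturbation argument
        set e : Fin q → ℝ := Pi.single ⟨0, hq⟩ 1 with hed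
        have hee : e ⬝ᵥ e = 1 := by
          rw [hed, dotProduct_single, Pi.single_eq_same, mul_one]
        have hmemM : ∀ t : ℝ, (qmi M (t • vecMulVec w e - K)).PosSemidef := by
          intro t
          apply hsub
          refine .of_dotProduct_mulVec_nonneg (qmi_herm N hNsymm _) fun v => ?_
          rw [star_trivial, qmi_form]
          have hZv : (t • vecMulVec w e - K) *ᵥ v = (t * (e ⬝ᵥ v)) • w - K *ᵥ v := by
            rw [Matrix.sub_mulVec, Matrix.smul_mulVec, vecMulVec_mulVec',
              smul_smul]
          rw [hZv, decomp]
          rw [show ((t * (e ⬝ᵥ v)) • w - K *ᵥ v) + K *ᵥ v = (t * (e ⬝ᵥ v)) • w from by abel]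
          rw [Matrix.mulVec_smul, dotProduct_smul, smul_dotProduct]
          have hwN : w ⬝ᵥ (N22 *ᵥ w) = 0 := by rw [← hyw]; exact hyN
          rw [hwN]
          simp only [smul_eq_mul, mul_zero]
          simpa using hsq v
        set x0 : Fin q ⊕ Fin r → ℝ := Sum.elim e (-(K *ᵥ e)) with hx0d
        set xw : Fin q ⊕ Fin r → ℝ := Sum.elim 0 w with hxwd
        have hxt : ∀ t : ℝ, Sum.elim e ((t • vecMulVec w e - K) *ᵥ e) = x0 + t • xw := by
          intro t
          funext i
          cases i with
          | inl i => simp [hx0d, hxwd]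
          | inr i =>
            have : (t • vecMulVec w e - K) *ᵥ e = (t * (e ⬝ᵥ e)) • w - K *ᵥ e := by
              rw [Matrix.sub_mulVec, Matrix.smul_mulVec, vecMulVec_mulVec',
                smul_smul]
            rw [this, hee, mul_one]
            simp [hx0d, hxwd]
            ring
        have hform : ∀ t : ℝ, 0 ≤ (x0 + t • xw) ⬝ᵥ (M *ᵥ (x0 + t • xw)) := by
          intro t
          have h2 := (hmemM t).dotProduct_mulVec_nonneg e
          rw [star_trivial, qmi_form, hxt t] at h2
          exact h2
        have hcoef : 0 ≤ xw ⬝ᵥ (M *ᵥ xw) := by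
          apply quad_coeff_nonneg _ (x0 ⬝ᵥ (M *ᵥ xw) + xw ⬝ᵥ (M *ᵥ x0)) (x0 ⬝ᵥ (M *ᵥ x0))
          intro t
          have hexp : (x0 + t • xw) ⬝ᵥ (M *ᵥ (x0 + t • xw))
              = (xw ⬝ᵥ (M *ᵥ xw)) * t ^ 2
                + (x0 ⬝ᵥ (M *ᵥ xw) + xw ⬝ᵥ (M *ᵥ x0)) * t + x0 ⬝ᵥ (M *ᵥ x0) := by
            rw [Matrix.mulVec_add, Matrix.mulVec_smul, dotProduct_add,
              add_dotProduct, add_dotProduct, dotProduct_smul,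
              smul_dotProduct, smul_dotProduct, dotProduct_smul]
            simp only [smul_eq_mul]
            ring
          rw [← hexp]
          exact hform t
        have hxxw : x = xw := by rw [hx, hxwd, hu0]
        rw [hxxw]
        exact hcoef
    · -- u ≠ 0
      by_cases hs : u ⬝ᵥ (S *ᵥ u) = 0
      · -- degenerate case
        have hyN : y ⬝ᵥ (N22 *ᵥ y) = 0 := le_antisymm (hn22 y) (by linarith [hxN, hs])
        have huu : u ⬝ᵥ u ≠ 0 := fun h => hu0 (dotProduct_self_eq_zero.mp h)
        refine main ((u ⬝ᵥ u)⁻¹ • u) ?_ ?_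
        · rw [smul_dotProduct, smul_eq_mul, inv_mul_cancel₀ huu]
        · intro v
          rw [hyN, mul_zero, add_zero]
          exact hsq v
      · -- main case
        have hspos : 0 < u ⬝ᵥ (S *ᵥ u) := lt_of_le_of_ne (hsq u) (Ne.symm hs)
        set s := u ⬝ᵥ (S *ᵥ u) with hsd
        refine main (s⁻¹ • (S *ᵥ u)) ?_ ?_
        · rw [smul_dotProduct, smul_eq_mul, dotProduct_comm,
            ← hsd, inv_mul_cancel₀ (ne_of_gt hspos)]
        · intro v
          have hcs := cauchy_schwarz_psd S hSpsd u v
          have hav : (s⁻¹ • (S *ᵥ u)) ⬝ᵥ v = s⁻¹ * (v ⬝ᵥ (S *ᵥ u)) := by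
            rw [smul_dotProduct, smul_eq_mul, dotProduct_comm]
          rw [hav]
          set c := y ⬝ᵥ (N22 *ᵥ y) with hcd
          have hc0 : c ≤ 0 := hn22 y
          have hcs' : -c ≤ s := by linarith [hxN]
          have hv0 : 0 ≤ v ⬝ᵥ (S *ᵥ v) := hsq v
          have hD : (v ⬝ᵥ (S *ᵥ u)) ^ 2 ≤ (v ⬝ᵥ (S *ᵥ v)) * s := hcs
          have hsinvpos : 0 < s⁻¹ := inv_pos.mpr hspos
          have hsne : s ≠ 0 := ne_of_gt hspos
          set D := v ⬝ᵥ (S *ᵥ u) with hDd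
          set V := v ⬝ᵥ (S *ᵥ v) with hVd
          have h1 : (s⁻¹ * D) ^ 2 * (-c) ≤ (s⁻¹ * D) ^ 2 * s :=
            mul_le_mul_of_nonneg_left hcs' (sq_nonneg _)
          have h2 : (s⁻¹ * D) ^ 2 * s = s⁻¹ * D ^ 2 := by
            field_simp
          have h3 : s⁻¹ * D ^ 2 ≤ s⁻¹ * (V * s) := mul_le_mul_of_nonneg_left hD hsinvpos.le
          have h4 : s⁻¹ * (V * s) = V := by
            field_simp
          linarith [h1, h2, h3, h4]
  · -- easy direction
    intro h Z hZ
    refine .of_dotProduct_mulVec_nonneg (qmi_herm M hM Z) fun v => ?_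
    rw [star_trivial, qmi_form]
    apply h
    have h2 := hZ.dotProduct_mulVec_nonneg v
    rwa [star_trivial, qmi_form] at h2
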